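/- There exists a constant C > 0 such that for all real x ≥ 2, Σ_{p ≤ x, p prime} 1/ln p ≤ C · x / (ln x)^2. -/

import Mathlib

open Finset

lemma theta_le_aux (n : ℕ) :
    ∑ p ∈ Finset.filter Nat.Prime (Finset.range (n + 1)), Real.log p ≤ 3 * n := by
  have h1 : ((primorial n : ℕ) : ℝ) ≤ (4 : ℝ) ^ n := by
    exact_mod_cast primorial_le_4_pow n
  have hpos : (0 : ℝ) < ((primorial n : ℕ) : ℝ) := by exact_mod_cast primorial_pos n
  have h2 : Real.log (primorial n) ≤ n * Real.log 4 :=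
    by
    refine (Real.log_le_log hpos h1).trans_eq ?_
    rw [Real.log_pow]
  have h3 : Real.log (primorial n)
      = ∑ p ∈ Finset.filter Nat.Prime (Finset.range (n + 1)), Real.log p := by
    rw [primorial, Nat.cast_prod, Real.log_prod]
    intro p hp
    simp only [Finset.mem_filter] at hp
    exact_mod_cast hp.2.ne_zero
  have h4 : Real.log 4 ≤ 3 := by
    have := Real.log_le_sub_one_of_pos (show (0:ℝ) < 4 by norm_num)
    linarith
  have hn : (0:ℝ) ≤ n := Nat.cast_nonneg n
  nlinarith [h2, h3.symm.le, h3.le]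

/-- There exists a constant `C > 0` such that for all real `x ≥ 2`,
`Σ_{p ≤ x, p prime} 1/ln p ≤ C · x / (ln x)^2`. -/
theorem sum_one_div_log_primes_upper_bound :
    ∃ C : ℝ, 0 < C ∧ ∀ x : ℝ, 2 ≤ x →
      ∑ p ∈ Finset.filter Nat.Prime (Finset.range (⌊x⌋₊ + 1)), 1 / Real.log p ≤
        C * x / (Real.log x) ^ 2 := by
  refine ⟨100, by norm_num, fun x hx => ?_⟩
  have hx0 : (0:ℝ) < x := by linarith
  have hL : 0 < Real.log x := Real.log_pos (by linarith)
  set s := Real.sqrt x with hsdef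
  have hs0 : 0 < s := Real.sqrt_pos.2 hx0
  have hs1 : 1 ≤ s := by
    rw [hsdef, show (1:ℝ) = Real.sqrt 1 by simp]
    exact Real.sqrt_le_sqrt (by linarith)
  have hss : s * s = x := Real.mul_self_sqrt hx0.le
  have hlogs : Real.log s = Real.log x / 2 := by
    rw [hsdef, Real.log_sqrt hx0.le]
  -- key: (log x)^2 ≤ 16 s
  have hkey : (Real.log x) ^ 2 ≤ 16 * s := by
    set a := x ^ ((1:ℝ)/4) with ha
    have ha0 : 0 < a := Real.rpow_pos_of_pos hx0 _
    have h4 : Real.log x = 4 * Real.log a := by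
      rw [ha, Real.log_rpow hx0]; ring
    have h5 : Real.log a ≤ a := by
      have := Real.log_le_sub_one_of_pos ha0; linarith
    have h6 : a * a = s := by
      rw [ha, ← Real.rpow_add hx0, hsdef, Real.sqrt_eq_rpow]
      norm_num
    nlinarith [hL, ha0, h5]
  set F := Finset.filter Nat.Prime (Finset.range (⌊x⌋₊ + 1)) with hF
  have hmem : ∀ p ∈ F, p.Prime := by
    intro p hp; rw [hF, Finset.mem_filter] at hp; exact hp.2
  have hlog2 : (1:ℝ)/2 ≤ Real.log 2 := by
    have := Real.log_two_gt_d9; linarith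
  have hsplit := Finset.sum_filter_add_sum_filter_not F (fun p : ℕ => (p:ℝ) ≤ s)
    (fun p => 1 / Real.log (p : ℝ))
  -- small primes
  have hsmall : ∑ p ∈ F.filter (fun p : ℕ => (p:ℝ) ≤ s), 1 / Real.log (p:ℝ) ≤ 4 * s := by
    have hcard : (F.filter (fun p : ℕ => (p:ℝ) ≤ s)).card ≤ ⌊s⌋₊ + 1 := by
      have hsub : F.filter (fun p : ℕ => (p:ℝ) ≤ s) ⊆ Finset.range (⌊s⌋₊ + 1) := by
        intro p hp
        rw [Finset.mem_filter] at hp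
        rw [Finset.mem_range, Nat.lt_succ_iff]
        exact Nat.le_floor hp.2
      exact (Finset.card_le_card hsub).trans_eq (Finset.card_range _)
    have hterm : ∀ p ∈ F.filter (fun p : ℕ => (p:ℝ) ≤ s), 1 / Real.log (p:ℝ) ≤ 2 := by
      intro p hp
      rw [Finset.mem_filter] at hp
      have hp2 : (2:ℝ) ≤ (p:ℝ) := by exact_mod_cast (hmem p hp.1).two_le
      have : Real.log 2 ≤ Real.log (p:ℝ) := Real.log_le_log (by norm_num) hp2
      rw [div_le_iff₀ (by linarith)]
      linarith
    calc ∑ p ∈ F.filter (fun p : ℕ => (p:ℝ) ≤ s), 1 / Real.log (p:ℝ)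
        ≤ ∑ _p ∈ F.filter (fun p : ℕ => (p:ℝ) ≤ s), (2:ℝ) := Finset.sum_le_sum hterm
      _ = (F.filter (fun p : ℕ => (p:ℝ) ≤ s)).card * 2 := by
          rw [Finset.sum_const, nsmul_eq_mul]
      _ ≤ (⌊s⌋₊ + 1 : ℝ) * 2 := by
          have : ((F.filter (fun p : ℕ => (p:ℝ) ≤ s)).card : ℝ) ≤ (⌊s⌋₊ + 1 : ℝ) := by
            exact_mod_cast hcard
          nlinarith
      _ ≤ 4 * s := by
          have := Nat.floor_le hs0.le
          nlinarith
  -- large primes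
  have hlarge : ∑ p ∈ F.filter (fun p : ℕ => ¬ (p:ℝ) ≤ s), 1 / Real.log (p:ℝ)
      ≤ 12 * x / (Real.log x) ^ 2 := by
    have hterm : ∀ p ∈ F.filter (fun p : ℕ => ¬ (p:ℝ) ≤ s), 1 / Real.log (p:ℝ)
        ≤ 4 * Real.log (p:ℝ) / (Real.log x) ^ 2 := by
      intro p hp
      rw [Finset.mem_filter] at hp
      have hps : s ≤ (p:ℝ) := le_of_not_ge hp.2
      have hlp : Real.log x / 2 ≤ Real.log (p:ℝ) := by
        rw [← hlogs]; exact Real.log_le_log hs0 hps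
      have hlp0 : 0 < Real.log (p:ℝ) := by linarith
      rw [div_le_div_iff₀ hlp0 (by positivity)]
      nlinarith
    calc ∑ p ∈ F.filter (fun p : ℕ => ¬ (p:ℝ) ≤ s), 1 / Real.log (p:ℝ)
        ≤ ∑ p ∈ F.filter (fun p : ℕ => ¬ (p:ℝ) ≤ s), 4 * Real.log (p:ℝ) / (Real.log x) ^ 2 :=
          Finset.sum_le_sum hterm
      _ ≤ ∑ p ∈ F, 4 * Real.log (p:ℝ) / (Real.log x) ^ 2 := by
          refine Finset.sum_le_sum_of_subset_of_nonneg (Finset.filter_subset _ _) ?_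
          intro p hp _
          have hp2 : (2:ℝ) ≤ (p:ℝ) := by exact_mod_cast (hmem p hp).two_le
          have : (0:ℝ) ≤ Real.log (p:ℝ) := Real.log_nonneg (by linarith)
          positivity
      _ = (∑ p ∈ F, Real.log (p:ℝ)) * (4 / (Real.log x) ^ 2) := by
          rw [Finset.sum_mul]; congr 1 with p; ring
      _ ≤ (3 * (⌊x⌋₊ : ℝ)) * (4 / (Real.log x) ^ 2) := by
          refine mul_le_mul_of_nonneg_right ?_ (by positivity)
          exact theta_le_aux ⌊x⌋₊
      _ ≤ 12 * x / (Real.log x) ^ 2 := by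
          have hfl : (⌊x⌋₊ : ℝ) ≤ x := Nat.floor_le hx0.le
          rw [div_eq_mul_inv (12 * x), mul_comm (3 * (⌊x⌋₊:ℝ))]
          rw [div_eq_mul_inv (4:ℝ)]
          have h2 : (0:ℝ) ≤ ((Real.log x) ^ 2)⁻¹ := by positivity
          nlinarith
  -- combine
  have hs16 : 4 * s ≤ 64 * x / (Real.log x) ^ 2 := by
    rw [le_div_iff₀ (by positivity)]
    nlinarith
  calc ∑ p ∈ F, 1 / Real.log (p:ℝ)
      = ∑ p ∈ F.filter (fun p : ℕ => (p:ℝ) ≤ s), 1 / Real.log (p:ℝ)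
        + ∑ p ∈ F.filter (fun p : ℕ => ¬ (p:ℝ) ≤ s), 1 / Real.log (p:ℝ) := hsplit.symm
    _ ≤ 64 * x / (Real.log x) ^ 2 + 12 * x / (Real.log x) ^ 2 := by
        have := hsmall.trans hs16
        linarith
    _ ≤ 100 * x / (Real.log x) ^ 2 := by
        rw [← add_div, div_le_div_iff₀ (by positivity) (by positivity)]
        nlinarith
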